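/- arXiv:1912.08913 — 6 statements merged into one kernel-verified Lean document; each statement's English description precedes it below -/
import Mathlib

section
/- Let V ⊂ ℝ² be a finite set of n points and let s₁, s₂ ∈ S¹ be linearly independent unit vectors such that the heights ⟨v, s₁⟩ for v ∈ V are pairwise distinct and the heights ⟨v, s₂⟩ for v ∈ V are pairwise distinct. Let A = {a ∈ ℝ² : (∃ u ∈ V, ⟨a, s₁⟩ = ⟨u, s₁⟩) and (∃ u ∈ V, ⟨a, s₂⟩ = ⟨u, s₂⟩)}, i.e., A is the set of the n² intersection points of the filtration lines of V in directions s₁ and s₂. Suppose s₃ ∈ S¹ is such that distinct points of A have distinct heights in direction s₃. Then V = {a ∈ A : ∃ v ∈ V, ⟨a, s₃⟩ = ⟨v, s₃⟩}. -/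
open scoped InnerProductSpace

/-- **Vertex Existence (plane graphs).**
If `V ⊂ ℝ²` is a finite set of `n` points, `s₁, s₂` are linearly independent unit
directions whose heights are pairwise distinct on `V`, `A` is the set of intersection
points of the filtration lines of `V` in directions `s₁` and `s₂`, and `s₃` is a unit
direction in which distinct points of `A` have distinct heights, then
`V = {a ∈ A : ∃ v ∈ V, ⟨a, s₃⟩ = ⟨v, s₃⟩}`. -/
theorem vertex_existence_plane
    (n : ℕ) (V : Finset (EuclideanSpace ℝ (Fin 2))) (hVn : V.card = n)
    (s₁ s₂ : EuclideanSpace ℝ (Fin 2))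
    (hs₁ : ‖s₁‖ = 1) (hs₂ : ‖s₂‖ = 1)
    (hind : LinearIndependent ℝ ![s₁, s₂])
    (h1 : ∀ u ∈ V, ∀ v ∈ V, ⟪u, s₁⟫_ℝ = ⟪v, s₁⟫_ℝ → u = v)
    (h2 : ∀ u ∈ V, ∀ v ∈ V, ⟪u, s₂⟫_ℝ = ⟪v, s₂⟫_ℝ → u = v)
    (A : Set (EuclideanSpace ℝ (Fin 2)))
    (hA : A = {a | (∃ u ∈ V, ⟪a, s₁⟫_ℝ = ⟪u, s₁⟫_ℝ) ∧ (∃ u ∈ V, ⟪a, s₂⟫_ℝ = ⟪u, s₂⟫_ℝ)})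
    (s₃ : EuclideanSpace ℝ (Fin 2)) (hs₃ : ‖s₃‖ = 1)
    (h3 : ∀ a ∈ A, ∀ b ∈ A, ⟪a, s₃⟫_ℝ = ⟪b, s₃⟫_ℝ → a = b) :
    (V : Set (EuclideanSpace ℝ (Fin 2))) = {a ∈ A | ∃ v ∈ V, ⟪a, s₃⟫_ℝ = ⟪v, s₃⟫_ℝ} := by
  have hVA : ∀ v ∈ V, v ∈ A := by
    intro v hv
    rw [hA]
    exact ⟨⟨v, hv, rfl⟩, ⟨v, hv, rfl⟩⟩
  ext x
  constructor
  · intro hx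
    exact ⟨hVA x hx, x, hx, rfl⟩
  · rintro ⟨hxA, v, hv, hx3⟩
    have := h3 x hxA v (hVA v hv) hx3
    subst this
    exact hv
end

section
/- Let d ≥ 2 and n ≥ 2. For each i ∈ {1, …, d}, let Hᵢ ⊂ ℝ be a set of n real numbers; let wᵢ be the maximum of Hᵢ minus the minimum of Hᵢ, and let hᵢ be the minimum difference between two distinct elements of Hᵢ. Set w = max_{1 ≤ i ≤ d} wᵢ and h = (1/2) min_{1 ≤ i ≤ d} hᵢ. Let A = H₁ × H₂ × ⋯ × H_d ⊂ ℝ^d, let x = (−1/w, −1/w, …, −1/w, (d−1)/h) ∈ ℝ^d, and let s = x/‖x‖. Then for all p = (p₁, …, p_d) and q = (q₁, …, q_d) in A with p_d ≠ q_d, the heights differ: ⟨p, s⟩ ≠ ⟨q, s⟩. -/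
open scoped InnerProductSpace

/-- **Generalized Vertex Localization.**
For each `i ∈ {1, …, d}` let `Hᵢ ⊂ ℝ` have `n ≥ 2` elements, let `wᵢ` be the diameter
(max minus min) of `Hᵢ` and `hᵢ` the minimum gap between distinct elements of `Hᵢ`.
Set `w = max wᵢ`, `h = (1/2) min hᵢ`, `x = (−1/w, …, −1/w, (d−1)/h)` and `s = x/‖x‖`.
Then any two points `p, q` of the grid `A = H₁ × ⋯ × H_d` with `p_d ≠ q_d` have
different heights in direction `s`. -/
theorem generalized_vertex_localization
    (d n : ℕ) (hd : 2 ≤ d) (hn : 2 ≤ n)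
    (H : Fin d → Finset ℝ) (hcard : ∀ i, (H i).card = n)
    (wv hv : Fin d → ℝ)
    (hwv : ∀ i, IsGreatest {t : ℝ | ∃ a ∈ H i, ∃ b ∈ H i, t = a - b} (wv i))
    (hhv : ∀ i, IsLeast {t : ℝ | ∃ a ∈ H i, ∃ b ∈ H i, a ≠ b ∧ t = |a - b|} (hv i))
    (w h : ℝ)
    (hwmax : IsGreatest (Set.range wv) w)
    (hhmin : IsLeast (Set.range hv) (2 * h))
    (x : EuclideanSpace ℝ (Fin d))
    (hx : ∀ i : Fin d, x i = if (i : ℕ) = d - 1 then ((d : ℝ) - 1) / h else -(1 / w))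
    (s : EuclideanSpace ℝ (Fin d)) (hs : s = ‖x‖⁻¹ • x)
    (p q : EuclideanSpace ℝ (Fin d))
    (hp : ∀ i : Fin d, p i ∈ H i) (hq : ∀ i : Fin d, q i ∈ H i)
    (hne : p ⟨d - 1, by omega⟩ ≠ q ⟨d - 1, by omega⟩) :
    ⟪p, s⟫_ℝ ≠ ⟪q, s⟫_ℝ := by
  set D : Fin d := ⟨d - 1, by omega⟩ with hD
  -- h > 0
  have hh : 0 < h := by
    obtain ⟨⟨j, hj⟩, hlb⟩ := hhmin
    obtain ⟨a, _, b, _, hab, habs⟩ := (hhv j).1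
    have : 0 < hv j := by rw [habs]; exact abs_pos.mpr (sub_ne_zero.mpr hab)
    nlinarith [this, hj]
  -- w > 0
  have hw : 0 < w := by
    obtain ⟨⟨j, hj⟩, hub⟩ := hwmax
    have h2 : 1 < (H j).card := by rw [hcard]; omega
    obtain ⟨a, ha, b, hb, hab⟩ := Finset.one_lt_card.mp h2
    have h1 : a - b ≤ wv j := (hwv j).2 ⟨a, ha, b, hb, rfl⟩
    have h2' : b - a ≤ wv j := (hwv j).2 ⟨b, hb, a, ha, rfl⟩
    have : 0 < |a - b| := abs_pos.mpr (sub_ne_zero.mpr hab)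
    have : |a - b| ≤ wv j := abs_sub_le_iff.mpr ⟨h1, h2'⟩
    linarith [hj ▸ this]
  -- bound on coordinate differences
  have hbound : ∀ i : Fin d, |p i - q i| ≤ w := by
    intro i
    have h1 : p i - q i ≤ wv i := (hwv i).2 ⟨p i, hp i, q i, hq i, rfl⟩
    have h2 : q i - p i ≤ wv i := (hwv i).2 ⟨q i, hq i, p i, hp i, rfl⟩
    have h3 : wv i ≤ w := hwmax.2 ⟨i, rfl⟩
    exact abs_sub_le_iff.mpr ⟨le_trans h1 h3, le_trans h2 h3⟩
  -- gap on last coordinate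
  have hgap : 2 * h ≤ |p D - q D| := by
    have h1 : hv D ≤ |p D - q D| := (hhv D).2 ⟨p D, hp D, q D, hq D, hne, rfl⟩
    have h2 : 2 * h ≤ hv D := hhmin.2 ⟨D, rfl⟩
    linarith
  -- x ≠ 0
  have hdpos : (0 : ℝ) < (d : ℝ) - 1 := by
    have : (2 : ℝ) ≤ (d : ℝ) := by exact_mod_cast hd
    linarith
  have hxD : x D = ((d : ℝ) - 1) / h := by rw [hx D]; simp [hD]
  have hxne : x ≠ 0 := by
    intro h0
    have : x D = 0 := by rw [h0]; rfl
    rw [hxD] at this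
    have := div_pos hdpos hh
    linarith
  have hnx : ‖x‖ ≠ 0 := norm_ne_zero_iff.mpr hxne
  -- main argument
  intro heq
  rw [hs, real_inner_smul_right, real_inner_smul_right] at heq
  have heq2 : ⟪p, x⟫_ℝ = ⟪q, x⟫_ℝ := mul_left_cancel₀ (inv_ne_zero hnx) heq
  have hsum : ∑ i : Fin d, (p i - q i) * x i = 0 := by
    have := sub_eq_zero.mpr heq2
    rw [← inner_sub_left] at this
    rw [PiLp.inner_apply] at this
    simpa [sub_mul, mul_sub, mul_comm] using this
  rw [← Finset.sum_erase_add _ _ (Finset.mem_univ D)] at hsum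
  -- rewrite the erased sum
  have hrest : ∀ i ∈ Finset.univ.erase D, (p i - q i) * x i = (p i - q i) * (-(1 / w)) := by
    intro i hi
    have hiD : i ≠ D := Finset.ne_of_mem_erase hi
    have : (i : ℕ) ≠ d - 1 := by
      intro hc
      apply hiD
      exact Fin.ext hc
    rw [hx i, if_neg this]
  rw [Finset.sum_congr rfl hrest] at hsum
  -- bound the small sum
  have hcard' : (Finset.univ.erase D).card = d - 1 := by
    rw [Finset.card_erase_of_mem (Finset.mem_univ D), Finset.card_univ, Fintype.card_fin]
  have hsmall : |∑ i ∈ Finset.univ.erase D, (p i - q i) * (-(1 / w))| ≤ (d : ℝ) - 1 := by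
    calc |∑ i ∈ Finset.univ.erase D, (p i - q i) * (-(1 / w))|
        ≤ ∑ i ∈ Finset.univ.erase D, |(p i - q i) * (-(1 / w))| :=
          Finset.abs_sum_le_sum_abs _ _
      _ ≤ ∑ i ∈ Finset.univ.erase D, w * (1 / w) := by
          apply Finset.sum_le_sum
          intro i hi
          rw [abs_mul, abs_neg, abs_of_pos (by positivity : (0:ℝ) < 1 / w)]
          exact mul_le_mul_of_nonneg_right (hbound i) (by positivity)
      _ = ((d : ℝ) - 1) * (w * (1 / w)) := by
          rw [Finset.sum_const, hcard', nsmul_eq_mul]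
          congr 1
          push_cast [Nat.cast_sub (by omega : 1 ≤ d)]
          ring
      _ = (d : ℝ) - 1 := by field_simp
  -- bound the big term
  have hbig : 2 * ((d : ℝ) - 1) ≤ |(p D - q D) * x D| := by
    rw [hxD, abs_mul, abs_of_pos (div_pos hdpos hh)]
    calc 2 * ((d : ℝ) - 1) = (2 * h) * (((d : ℝ) - 1) / h) := by field_simp
      _ ≤ |p D - q D| * (((d : ℝ) - 1) / h) :=
          mul_le_mul_of_nonneg_right hgap (le_of_lt (div_pos hdpos hh))
  have : (p D - q D) * x D = -∑ i ∈ Finset.univ.erase D, (p i - q i) * (-(1 / w)) := by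
    linarith [hsum]
  rw [this, abs_neg] at hbig
  linarith
end

section
/- Let G = (V, E) be a straight-line embedded graph in ℝ^d with d ≥ 2, let v, v′ ∈ V be distinct, and let s₁, s₂ ∈ S^{d−1}. Assume: (i) for every w ∈ V \ {v}, ⟨w, s₁⟩ ≠ ⟨v, s₁⟩ and ⟨w, s₂⟩ ≠ ⟨v, s₂⟩; and (ii) v′ is the unique point of V \ {v} lying in the wedge at v determined by s₁ and s₂. Then |indeg(v, s₁) − indeg(v, s₂)| = 1 if and only if {v, v′} ∈ E. -/
open scoped InnerProductSpace Classical

/-- The indegree of a vertex `v` of a straight-line embedded graph (with vertex set `V`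
and adjacency relation `adj`) in direction `dir`: the number of vertices `w` adjacent
to `v` lying at height at most that of `v` in direction `dir`. -/
noncomputable def indeg {d : ℕ} (V : Finset (EuclideanSpace ℝ (Fin d)))
    (adj : EuclideanSpace ℝ (Fin d) → EuclideanSpace ℝ (Fin d) → Prop)
    (v dir : EuclideanSpace ℝ (Fin d)) : ℕ :=
  (V.filter fun w => adj v w ∧ ⟪w, dir⟫_ℝ ≤ ⟪v, dir⟫_ℝ).card

/-- **Edge Existence.**
Let `G = (V, E)` be a straight-line embedded graph in `ℝ^d`, `v ≠ v'` vertices, and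
`s₁, s₂` unit directions such that no other vertex shares the height of `v` in either
direction and `v'` is the unique point of `V \ {v}` in the wedge at `v` determined by
`s₁` and `s₂` (i.e. exactly one of `⟨·, s₁⟩ < ⟨v, s₁⟩`, `⟨·, s₂⟩ < ⟨v, s₂⟩` holds).
Then `|indeg(v, s₁) − indeg(v, s₂)| = 1` iff `{v, v'} ∈ E`. -/
theorem edge_existence
    (d : ℕ) (hd : 2 ≤ d)
    (V : Finset (EuclideanSpace ℝ (Fin d)))
    (adj : EuclideanSpace ℝ (Fin d) → EuclideanSpace ℝ (Fin d) → Prop)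
    (hsymm : ∀ a b, adj a b → adj b a)
    (hedge : ∀ a b, adj a b → a ∈ V ∧ b ∈ V ∧ a ≠ b)
    (v v' : EuclideanSpace ℝ (Fin d)) (hv : v ∈ V) (hv' : v' ∈ V) (hne : v ≠ v')
    (s₁ s₂ : EuclideanSpace ℝ (Fin d)) (hs₁ : ‖s₁‖ = 1) (hs₂ : ‖s₂‖ = 1)
    (hheights : ∀ w ∈ V, w ≠ v → ⟪w, s₁⟫_ℝ ≠ ⟪v, s₁⟫_ℝ ∧ ⟪w, s₂⟫_ℝ ≠ ⟪v, s₂⟫_ℝ)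
    (hwedge : Xor' (⟪v', s₁⟫_ℝ < ⟪v, s₁⟫_ℝ) (⟪v', s₂⟫_ℝ < ⟪v, s₂⟫_ℝ))
    (huniq : ∀ w ∈ V, w ≠ v →
      Xor' (⟪w, s₁⟫_ℝ < ⟪v, s₁⟫_ℝ) (⟪w, s₂⟫_ℝ < ⟪v, s₂⟫_ℝ) → w = v') :
    |(indeg V adj v s₁ : ℤ) - (indeg V adj v s₂ : ℤ)| = 1 ↔ adj v v' := by
  classical
  have hne' : v' ≠ v := Ne.symm hne
  have hmem : ∀ w, adj v w → w ∈ V ∧ w ≠ v := by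
    intro w h
    obtain ⟨_, h2, h3⟩ := hedge v w h
    exact ⟨h2, Ne.symm h3⟩
  have hiff : ∀ w ∈ V, w ≠ v → w ≠ v' →
      ((⟪w, s₁⟫_ℝ ≤ ⟪v, s₁⟫_ℝ) ↔ (⟪w, s₂⟫_ℝ ≤ ⟪v, s₂⟫_ℝ)) := by
    intro w hw hwv hwv'
    obtain ⟨h1, h2⟩ := hheights w hw hwv
    have hx : ¬ Xor' (⟪w, s₁⟫_ℝ < ⟪v, s₁⟫_ℝ) (⟪w, s₂⟫_ℝ < ⟪v, s₂⟫_ℝ) :=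
      fun hx => hwv' (huniq w hw hwv hx)
    unfold Xor' at hx
    constructor
    · intro h; by_contra h'
      exact hx (Or.inl ⟨lt_of_le_of_ne h h1, fun hc => h' hc.le⟩)
    · intro h; by_contra h'
      exact hx (Or.inr ⟨lt_of_le_of_ne h h2, fun hc => h' hc.le⟩)
  have h1 := hheights v' hv' hne'
  by_cases hadj : adj v v'
  · rcases hwedge with ⟨hlt1, hnlt2⟩ | ⟨hlt2, hnlt1⟩
    · have hnB : v' ∉ V.filter (fun w => adj v w ∧ ⟪w, s₂⟫_ℝ ≤ ⟪v, s₂⟫_ℝ) := by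
        simp only [Finset.mem_filter]
        rintro ⟨_, _, h⟩
        exact hnlt2 (lt_of_le_of_ne h h1.2)
      have hA : V.filter (fun w => adj v w ∧ ⟪w, s₁⟫_ℝ ≤ ⟪v, s₁⟫_ℝ)
          = insert v' (V.filter (fun w => adj v w ∧ ⟪w, s₂⟫_ℝ ≤ ⟪v, s₂⟫_ℝ)) := by
        ext w
        simp only [Finset.mem_filter, Finset.mem_insert]
        constructor
        · rintro ⟨hwV, hw1, hw2⟩
          by_cases hwv' : w = v'
          · exact Or.inl hwv'
          · exact Or.inr ⟨hwV, hw1, (hiff w hwV (hmem w hw1).2 hwv').1 hw2⟩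
        · rintro (rfl | ⟨hwV, hw1, hw2⟩)
          · exact ⟨hv', hadj, hlt1.le⟩
          · have hwv' : w ≠ v' := by
              rintro rfl
              exact hnlt2 (lt_of_le_of_ne hw2 h1.2)
            exact ⟨hwV, hw1, (hiff w hwV (hmem w hw1).2 hwv').2 hw2⟩
      unfold indeg
      rw [hA, Finset.card_insert_of_notMem hnB]
      simp only [hadj, iff_true]
      push_cast
      ring_nf
      simp
    · have hnA : v' ∉ V.filter (fun w => adj v w ∧ ⟪w, s₁⟫_ℝ ≤ ⟪v, s₁⟫_ℝ) := by
        simp only [Finset.mem_filter]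
        rintro ⟨_, _, h⟩
        exact hnlt1 (lt_of_le_of_ne h h1.1)
      have hB : V.filter (fun w => adj v w ∧ ⟪w, s₂⟫_ℝ ≤ ⟪v, s₂⟫_ℝ)
          = insert v' (V.filter (fun w => adj v w ∧ ⟪w, s₁⟫_ℝ ≤ ⟪v, s₁⟫_ℝ)) := by
        ext w
        simp only [Finset.mem_filter, Finset.mem_insert]
        constructor
        · rintro ⟨hwV, hw1, hw2⟩
          by_cases hwv' : w = v'
          · exact Or.inl hwv'
          · exact Or.inr ⟨hwV, hw1, (hiff w hwV (hmem w hw1).2 hwv').2 hw2⟩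
        · rintro (rfl | ⟨hwV, hw1, hw2⟩)
          · exact ⟨hv', hadj, hlt2.le⟩
          · have hwv' : w ≠ v' := by
              rintro rfl
              exact hnlt1 (lt_of_le_of_ne hw2 h1.1)
            exact ⟨hwV, hw1, (hiff w hwV (hmem w hw1).2 hwv').1 hw2⟩
      unfold indeg
      rw [hB, Finset.card_insert_of_notMem hnA]
      simp only [hadj, iff_true]
      push_cast
      ring_nf
      simp
  · have hAB : V.filter (fun w => adj v w ∧ ⟪w, s₁⟫_ℝ ≤ ⟪v, s₁⟫_ℝ)
        = V.filter (fun w => adj v w ∧ ⟪w, s₂⟫_ℝ ≤ ⟪v, s₂⟫_ℝ) := by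
      ext w
      simp only [Finset.mem_filter]
      constructor
      · rintro ⟨hwV, hw1, hw2⟩
        have hwv' : w ≠ v' := fun h => hadj (h ▸ hw1)
        exact ⟨hwV, hw1, (hiff w hwV (hmem w hw1).2 hwv').1 hw2⟩
      · rintro ⟨hwV, hw1, hw2⟩
        have hwv' : w ≠ v' := fun h => hadj (h ▸ hw1)
        exact ⟨hwV, hw1, (hiff w hwV (hmem w hw1).2 hwv').2 hw2⟩
    unfold indeg
    rw [hAB]
    simp [hadj]
end

section
/- Let d ≥ 2 and let V ⊂ ℝ^d be a finite set with no three points collinear. Let E₁ and E₂ be two sets of unordered pairs of distinct points of V, and for j ∈ {1, 2} let indeg_{E_j}(v, s) = |{w ∈ V : {v, w} ∈ E_j and ⟨w, s⟩ ≤ ⟨v, s⟩}|. If indeg_{E₁}(v, s) = indeg_{E₂}(v, s) for every v ∈ V and every direction s ∈ S^{d−1}, then E₁ = E₂. In other words, the edge set of a straight-line embedded graph on a fixed vertex set in general position is uniquely determined by its directional indegree function. -/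
open scoped InnerProductSpace Classical

lemma avoid_subspaces {d : ℕ} (H : Submodule ℝ (EuclideanSpace ℝ (Fin d))) (hH : H ≠ ⊥)
    (U : Finset (EuclideanSpace ℝ (Fin d))) (hU : ∀ u ∈ U, ¬ H ≤ (ℝ ∙ u)ᗮ) :
    ∃ x, x ∈ H ∧ x ≠ 0 ∧ ∀ u ∈ U, ⟪u, x⟫_ℝ ≠ 0 := by
  by_contra hcon
  push_neg at hcon
  have hnt : Nontrivial H := Submodule.nontrivial_iff_ne_bot.mpr hH
  set p : Option {u // u ∈ U} → Submodule ℝ H := fun i =>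
    match i with
    | none => ⊥
    | some u => Submodule.comap H.subtype (ℝ ∙ (u : EuclideanSpace ℝ (Fin d)))ᗮ with hp
  have hcover : ⋃ i, ((p i : Submodule ℝ H) : Set H) = Set.univ := by
    ext x
    simp only [Set.mem_iUnion, Set.mem_univ, iff_true]
    by_cases hx0 : (x : EuclideanSpace ℝ (Fin d)) = 0
    · exact ⟨none, by simp only [hp, Submodule.mem_bot]; exact Subtype.ext hx0⟩
    · obtain ⟨u, hu, hinner⟩ := hcon (x : EuclideanSpace ℝ (Fin d)) x.2 (by simpa using hx0)
      exact ⟨some ⟨u, hu⟩, by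
        simp only [hp, Submodule.mem_comap, Submodule.coe_subtype]
        exact Submodule.mem_orthogonal_singleton_iff_inner_right.mpr hinner⟩
  obtain ⟨i, hi⟩ := Subspace.exists_eq_top_of_iUnion_eq_univ hcover
  match i with
  | none => exact absurd hi bot_ne_top
  | some u =>
      have : H ≤ (ℝ ∙ (u : EuclideanSpace ℝ (Fin d)))ᗮ :=
        Submodule.comap_subtype_eq_top.mp hi
      exact hU u u.2 this

/-- **Edges are determined by directional indegrees.**
Let `V ⊂ ℝ^d` (`d ≥ 2`) be finite with no three points collinear, and let `E₁`, `E₂`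
be two edge sets on `V` (symmetric adjacency relations between distinct points of
`V`).  If for every `v ∈ V` and every unit direction `s` the directional indegrees
`|{w ∈ V : {v,w} ∈ Eⱼ, ⟨w, s⟩ ≤ ⟨v, s⟩}|` agree for `j = 1, 2`, then `E₁ = E₂`. -/
theorem edges_determined_by_indegrees
    (d : ℕ) (hd : 2 ≤ d)
    (V : Finset (EuclideanSpace ℝ (Fin d)))
    (hgen : ∀ a ∈ V, ∀ b ∈ V, ∀ c ∈ V, a ≠ b → a ≠ c → b ≠ c →
      ¬ Collinear ℝ ({a, b, c} : Set (EuclideanSpace ℝ (Fin d))))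
    (adj₁ adj₂ : EuclideanSpace ℝ (Fin d) → EuclideanSpace ℝ (Fin d) → Prop)
    (hsymm₁ : ∀ a b, adj₁ a b → adj₁ b a)
    (hedge₁ : ∀ a b, adj₁ a b → a ∈ V ∧ b ∈ V ∧ a ≠ b)
    (hsymm₂ : ∀ a b, adj₂ a b → adj₂ b a)
    (hedge₂ : ∀ a b, adj₂ a b → a ∈ V ∧ b ∈ V ∧ a ≠ b)
    (hind : ∀ v ∈ V, ∀ s : EuclideanSpace ℝ (Fin d), ‖s‖ = 1 →
      (V.filter fun w => adj₁ v w ∧ ⟪w, s⟫_ℝ ≤ ⟪v, s⟫_ℝ).card =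
      (V.filter fun w => adj₂ v w ∧ ⟪w, s⟫_ℝ ≤ ⟪v, s⟫_ℝ).card) :
    ∀ a b, adj₁ a b ↔ adj₂ a b := by
  classical
  suffices key : ∀ v ∈ V, ∀ w ∈ V, v ≠ w → (adj₁ v w ↔ adj₂ v w) by
    intro a b
    constructor
    · intro h; obtain ⟨ha, hb, hab⟩ := hedge₁ a b h; exact (key a ha b hb hab).mp h
    · intro h; obtain ⟨ha, hb, hab⟩ := hedge₂ a b h; exact (key a ha b hb hab).mpr h
  intro v hv w hw hvw
  have hwv : w - v ≠ 0 := sub_ne_zero.mpr hvw.symm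
  -- the splitting identity
  have split : ∀ (adj : EuclideanSpace ℝ (Fin d) → EuclideanSpace ℝ (Fin d) → Prop)
      (s : EuclideanSpace ℝ (Fin d)),
      (V.filter fun u => adj v u ∧ ⟪u, s⟫_ℝ ≤ ⟪v, s⟫_ℝ).card
        + (V.filter fun u => adj v u ∧ ⟪u, -s⟫_ℝ ≤ ⟪v, -s⟫_ℝ).card
      = (V.filter fun u => adj v u).card
        + (V.filter fun u => adj v u ∧ ⟪u, s⟫_ℝ = ⟪v, s⟫_ℝ).card := by
    intro adj s
    rw [← Finset.card_union_add_card_inter, ← Finset.filter_or, ← Finset.filter_and]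
    congr 1
    · refine congrArg Finset.card (Finset.filter_congr ?_)
      intro u _
      simp only [inner_neg_right, neg_le_neg_iff]
      rcases le_total (⟪u, s⟫_ℝ) (⟪v, s⟫_ℝ) with h | h <;> tauto
    · refine congrArg Finset.card (Finset.filter_congr ?_)
      intro u _
      simp only [inner_neg_right, neg_le_neg_iff]
      constructor
      · rintro ⟨⟨ha, h1⟩, _, h2⟩; exact ⟨ha, le_antisymm h1 h2⟩
      · rintro ⟨ha, h⟩; exact ⟨⟨ha, h.le⟩, ha, h.ge⟩
  -- non-collinearity
  have hncol : ∀ u ∈ V, u ≠ v → u ≠ w → (u - v) ∉ (ℝ ∙ (w - v)) := by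
    intro u hu huv huw hmem
    obtain ⟨c, hc⟩ := Submodule.mem_span_singleton.mp hmem
    apply hgen v hv w hw u hu hvw huv.symm huw.symm
    rw [collinear_iff_of_mem (Set.mem_insert v {w, u})]
    refine ⟨w - v, ?_⟩
    rintro p (rfl | rfl | rfl)
    · exact ⟨0, by simp⟩
    · exact ⟨1, by simp⟩
    · exact ⟨c, by simp [hc]⟩
  -- Step A : a fully generic direction, giving equality of degrees
  have htopbot : (⊤ : Submodule ℝ (EuclideanSpace ℝ (Fin d))) ≠ ⊥ := by
    intro h
    have : w - v ∈ (⊥ : Submodule ℝ (EuclideanSpace ℝ (Fin d))) := h ▸ Submodule.mem_top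
    exact hwv ((Submodule.mem_bot ℝ).mp this)
  obtain ⟨x, -, hx0, hxinner⟩ := avoid_subspaces ⊤ htopbot ((V.erase v).image (· - v)) (by
    intro u' hu'
    obtain ⟨u, hu, rfl⟩ := Finset.mem_image.mp hu'
    intro h
    have h0 : ⟪u - v, u - v⟫_ℝ = 0 :=
      Submodule.mem_orthogonal_singleton_iff_inner_right.mp (h Submodule.mem_top)
    exact sub_ne_zero.mpr (Finset.ne_of_mem_erase hu) (inner_self_eq_zero.mp h0))
  set s := ‖x‖⁻¹ • x with hs_def
  have hcx : ‖x‖⁻¹ ≠ 0 := inv_ne_zero (norm_ne_zero_iff.mpr hx0)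
  have hs : ‖s‖ = 1 := norm_smul_inv_norm hx0
  have hsgen : ∀ u ∈ V.erase v, ⟪u - v, s⟫_ℝ ≠ 0 := by
    intro u hu
    rw [hs_def, real_inner_smul_right]
    exact mul_ne_zero hcx (hxinner _ (Finset.mem_image_of_mem _ hu))
  have hempty : ∀ (adj : EuclideanSpace ℝ (Fin d) → EuclideanSpace ℝ (Fin d) → Prop),
      (∀ a b, adj a b → a ∈ V ∧ b ∈ V ∧ a ≠ b) →
      (V.filter fun u => adj v u ∧ ⟪u, s⟫_ℝ = ⟪v, s⟫_ℝ) = ∅ := by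
    intro adj hedge
    rw [Finset.filter_eq_empty_iff]
    rintro u hu ⟨hadj, heq⟩
    have huv : u ≠ v := fun h => (hedge v u hadj).2.2 h.symm
    apply hsgen u (Finset.mem_erase.mpr ⟨huv, hu⟩)
    rw [inner_sub_left, heq, sub_self]
  have hdeg : (V.filter fun u => adj₁ v u).card = (V.filter fun u => adj₂ v u).card := by
    have h1 := split adj₁ s
    have h2 := split adj₂ s
    rw [hempty adj₁ hedge₁] at h1
    rw [hempty adj₂ hedge₂] at h2
    have e1 := hind v hv s hs
    have e2 := hind v hv (-s) (by rw [norm_neg]; exact hs)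
    simp only [Finset.card_empty] at h1 h2
    omega
  -- Step B : a direction orthogonal exactly to w - v
  have hdo : ((ℝ ∙ (w - v))ᗮᗮ : Submodule ℝ (EuclideanSpace ℝ (Fin d))) = ℝ ∙ (w - v) :=
    Submodule.orthogonal_orthogonal _
  have hHbot : ((ℝ ∙ (w - v))ᗮ : Submodule ℝ (EuclideanSpace ℝ (Fin d))) ≠ ⊥ := by
    intro h
    have h2 : (ℝ ∙ (w - v) : Submodule ℝ (EuclideanSpace ℝ (Fin d))) = ⊤ := by
      rw [← hdo, h, Submodule.bot_orthogonal_eq_top]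
    have h3 := finrank_span_singleton (K := ℝ) hwv
    rw [h2, finrank_top, finrank_euclideanSpace_fin] at h3
    omega
  obtain ⟨y, hyH, hy0, hyinner⟩ := avoid_subspaces ((ℝ ∙ (w - v))ᗮ) hHbot
      (((V.erase v).erase w).image (· - v)) (by
    intro u' hu'
    obtain ⟨u, hu, rfl⟩ := Finset.mem_image.mp hu'
    intro h
    have hle := Submodule.orthogonal_le h
    rw [hdo] at hle
    rw [Submodule.orthogonal_orthogonal] at hle
    have huw : u ≠ w := Finset.ne_of_mem_erase hu
    have huv : u ≠ v := Finset.ne_of_mem_erase (Finset.mem_of_mem_erase hu)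
    exact hncol u (Finset.mem_of_mem_erase (Finset.mem_of_mem_erase hu)) huv huw
      (hle (Submodule.mem_span_singleton_self _)))
  set t := ‖y‖⁻¹ • y with ht_def
  have hcy : ‖y‖⁻¹ ≠ 0 := inv_ne_zero (norm_ne_zero_iff.mpr hy0)
  have ht : ‖t‖ = 1 := norm_smul_inv_norm hy0
  have htw : ⟪w - v, t⟫_ℝ = 0 := by
    rw [ht_def, real_inner_smul_right,
      Submodule.mem_orthogonal_singleton_iff_inner_right.mp hyH, mul_zero]
  have htgen : ∀ u ∈ (V.erase v).erase w, ⟪u - v, t⟫_ℝ ≠ 0 := by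
    intro u hu
    rw [ht_def, real_inner_smul_right]
    exact mul_ne_zero hcy (hyinner _ (Finset.mem_image_of_mem _ hu))
  have heqset : ∀ (adj : EuclideanSpace ℝ (Fin d) → EuclideanSpace ℝ (Fin d) → Prop),
      (∀ a b, adj a b → a ∈ V ∧ b ∈ V ∧ a ≠ b) →
      (V.filter fun u => adj v u ∧ ⟪u, t⟫_ℝ = ⟪v, t⟫_ℝ)
        = if adj v w then {w} else ∅ := by
    intro adj hedge
    ext u
    simp only [Finset.mem_filter]
    constructor
    · rintro ⟨hu, hadj, heq⟩
      have huv : u ≠ v := fun h => (hedge v u hadj).2.2 h.symm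
      have heq' : ⟪u - v, t⟫_ℝ = 0 := by rw [inner_sub_left, heq, sub_self]
      by_cases huw : u = w
      · subst huw
        rw [if_pos hadj]
        exact Finset.mem_singleton_self u
      · exact absurd heq'
          (htgen u (Finset.mem_erase.mpr ⟨huw, Finset.mem_erase.mpr ⟨huv, hu⟩⟩))
    · intro h
      by_cases hadjw : adj v w
      · rw [if_pos hadjw, Finset.mem_singleton] at h
        subst h
        refine ⟨hw, hadjw, ?_⟩
        have := htw
        rw [inner_sub_left, sub_eq_zero] at this
        exact this
      · rw [if_neg hadjw] at h
        exact absurd h (Finset.notMem_empty u)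
  -- conclude
  have h1 := split adj₁ t
  have h2 := split adj₂ t
  rw [heqset adj₁ hedge₁] at h1
  rw [heqset adj₂ hedge₂] at h2
  have e1 := hind v hv t ht
  have e2 := hind v hv (-t) (by rw [norm_neg]; exact ht)
  by_cases ha1 : adj₁ v w <;> by_cases ha2 : adj₂ v w
  · exact iff_of_true ha1 ha2
  · exfalso
    rw [if_pos ha1] at h1; rw [if_neg ha2] at h2
    simp only [Finset.card_singleton, Finset.card_empty] at h1 h2
    omega
  · exfalso
    rw [if_neg ha1] at h1; rw [if_pos ha2] at h2
    simp only [Finset.card_singleton, Finset.card_empty] at h1 h2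
    omega
  · exact iff_of_false ha1 ha2
end

section
/- Let V ⊂ ℝ² be a set of n ≥ 2 points whose first coordinates are pairwise distinct and whose second coordinates are pairwise distinct. Let X be the set of first coordinates of points of V and Y the set of second coordinates, and let A = X × Y ⊂ ℝ² (the n² candidate locations). Let w be the maximum of X minus the minimum of X, let h be the minimum difference between two distinct elements of Y, and let s = (−h/2, w)/‖(−h/2, w)‖ (a unit vector perpendicular to (w, h/2)). Then V = {a ∈ A : ∃ v ∈ V, ⟨a, s⟩ = ⟨v, s⟩}; that is, the points of V are exactly the candidate locations whose height in direction s equals the height of some point of V, so V is determined by its sets of heights in the directions (1,0), (0,1), and s. -/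
open scoped InnerProductSpace Classical

/-- **Plane vertex reconstruction from three directions.**
Let `V ⊂ ℝ²` be `n ≥ 2` points with pairwise distinct first coordinates and pairwise
distinct second coordinates, `X` and `Y` the sets of first and second coordinates, and
`A = X × Y` the `n²` candidate locations.  With `w` the diameter of `X`, `h` the
minimum gap of `Y`, and `s = (−h/2, w)/‖(−h/2, w)‖`, the points of `V` are exactly the
candidate locations whose height in direction `s` equals the height of some point of
`V`; hence `V` is determined by its heights in directions `(1,0)`, `(0,1)`, and `s`. -/
theorem plane_vertex_reconstruction
    (n : ℕ) (hn : 2 ≤ n)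
    (V : Finset (EuclideanSpace ℝ (Fin 2))) (hVn : V.card = n)
    (hfst : ∀ u ∈ V, ∀ v ∈ V, u 0 = v 0 → u = v)
    (hsnd : ∀ u ∈ V, ∀ v ∈ V, u 1 = v 1 → u = v)
    (X Y : Finset ℝ)
    (hX : X = V.image fun v => v 0) (hY : Y = V.image fun v => v 1)
    (w h : ℝ)
    (hw : IsGreatest {t : ℝ | ∃ a ∈ X, ∃ b ∈ X, t = a - b} w)
    (hh : IsLeast {t : ℝ | ∃ a ∈ Y, ∃ b ∈ Y, a ≠ b ∧ t = |a - b|} h)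
    (u₀ : EuclideanSpace ℝ (Fin 2)) (hu₀0 : u₀ 0 = -(h / 2)) (hu₀1 : u₀ 1 = w)
    (s : EuclideanSpace ℝ (Fin 2)) (hs : s = ‖u₀‖⁻¹ • u₀) :
    (V : Set (EuclideanSpace ℝ (Fin 2))) =
      {a : EuclideanSpace ℝ (Fin 2) | (a 0 ∈ X ∧ a 1 ∈ Y) ∧
        ∃ v ∈ V, ⟪a, s⟫_ℝ = ⟪v, s⟫_ℝ} := by

  classical
  -- h is positive
  obtain ⟨a₀, ha₀, b₀, hb₀, hab, hhe⟩ := hh.1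
  have hhpos : 0 < h := hhe ▸ abs_pos.mpr (sub_ne_zero.mpr hab)
  -- w is positive
  obtain ⟨p, hp, q, hq, hpq⟩ := Finset.one_lt_card.mp (by omega : 1 < V.card)
  have hpq0 : p 0 ≠ q 0 := fun hc => hpq (hfst p hp q hq hc)
  have hpX : p 0 ∈ X := hX ▸ Finset.mem_image_of_mem _ hp
  have hqX : q 0 ∈ X := hX ▸ Finset.mem_image_of_mem _ hq
  have hw1 : p 0 - q 0 ≤ w := hw.2 ⟨_, hpX, _, hqX, rfl⟩
  have hw2 : q 0 - p 0 ≤ w := hw.2 ⟨_, hqX, _, hpX, rfl⟩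
  have hwpos : 0 < w := by
    rcases lt_or_gt_of_ne hpq0 with hlt | hlt
    · linarith
    · linarith
  have hu₀ : u₀ ≠ 0 := by
    intro hc
    have : u₀ 1 = 0 := by rw [hc]; rfl
    rw [hu₀1] at this; linarith
  have hnorm : ‖u₀‖ ≠ 0 := norm_ne_zero_iff.mpr hu₀
  have hin : ∀ x : EuclideanSpace ℝ (Fin 2),
      ⟪x, u₀⟫_ℝ = -(h / 2) * x 0 + w * x 1 := by
    intro x
    simp [PiLp.inner_apply, RCLike.inner_apply, Fin.sum_univ_two, hu₀0, hu₀1]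
  ext a
  simp only [Set.mem_setOf_eq, Finset.mem_coe]
  constructor
  · intro haV
    exact ⟨⟨hX ▸ Finset.mem_image_of_mem _ haV, hY ▸ Finset.mem_image_of_mem _ haV⟩,
      a, haV, rfl⟩
  · rintro ⟨⟨ha0, ha1⟩, v, hv, heq⟩
    rw [hs, real_inner_smul_right, real_inner_smul_right,
      mul_right_inj' (inv_ne_zero hnorm), hin, hin] at heq
    have hvX : v 0 ∈ X := hX ▸ Finset.mem_image_of_mem _ hv
    have hvY : v 1 ∈ Y := hY ▸ Finset.mem_image_of_mem _ hv
    have h1 : a 0 - v 0 ≤ w := hw.2 ⟨_, ha0, _, hvX, rfl⟩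
    have h2 : v 0 - a 0 ≤ w := hw.2 ⟨_, hvX, _, ha0, rfl⟩
    have key : w * (a 1 - v 1) = h / 2 * (a 0 - v 0) := by linarith
    have hy : a 1 = v 1 := by
      by_contra hne
      have hge : h ≤ |a 1 - v 1| := hh.2 ⟨_, ha1, _, hvY, hne, rfl⟩
      have habs : |w * (a 1 - v 1)| = h / 2 * |a 0 - v 0| := by
        rw [key, abs_mul, abs_of_pos (by linarith : (0:ℝ) < h / 2)]
      rw [abs_mul, abs_of_pos hwpos] at habs
      have hb0 : |a 0 - v 0| ≤ w := abs_le.mpr ⟨by linarith, h1⟩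
      nlinarith
    have hx : a 0 = v 0 := by
      rw [hy, sub_self, mul_zero] at key
      have := key.symm
      rcases mul_eq_zero.mp this with hc | hc
      · linarith
      · linarith
    have hav : a = v := by
      ext i
      fin_cases i
      · exact hx
      · exact hy
    rw [hav]; exact hv
end

section
/- Let d ≥ 2 and let V ⊂ ℝ^d be a finite set of n points such that for each i ∈ {1, …, d} the i-th coordinates of the points of V are pairwise distinct. For each i, let Hᵢ be the set of i-th coordinates of points of V, and let A = H₁ × H₂ × ⋯ × H_d ⊂ ℝ^d (the n^d candidate locations). Then there exists a direction s ∈ S^{d−1} such that distinct points of A have distinct heights in direction s, and for any such s, V = {a ∈ A : ∃ v ∈ V, ⟨a, s⟩ = ⟨v, s⟩}; that is, V is determined by its sets of heights in the d coordinate directions e₁, …, e_d together with the direction s. -/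
open scoped InnerProductSpace Classical

/-- **Vertex reconstruction in higher dimensions.**
Let `V ⊂ ℝ^d` (`d ≥ 2`) be `n` points whose `i`-th coordinates are pairwise distinct
for every `i`.  With `Hᵢ` the set of `i`-th coordinates and `A = H₁ × ⋯ × H_d` the
`n^d` candidate locations, there is a unit direction `s` in which distinct points of
`A` have distinct heights; and for any such `s`, the points of `V` are exactly the
candidate locations whose height in direction `s` equals the height of some point of
`V`.  Hence `V` is determined by its heights in the coordinate directions together
with `s`. -/
theorem vertex_reconstruction_higher_dim
    (d n : ℕ) (hd : 2 ≤ d)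
    (V : Finset (EuclideanSpace ℝ (Fin d))) (hVn : V.card = n)
    (hcoord : ∀ i : Fin d, ∀ u ∈ V, ∀ v ∈ V, u i = v i → u = v) :
    (∃ s : EuclideanSpace ℝ (Fin d), ‖s‖ = 1 ∧
      ∀ a b : EuclideanSpace ℝ (Fin d),
        (∀ i : Fin d, a i ∈ V.image fun v => v i) →
        (∀ i : Fin d, b i ∈ V.image fun v => v i) →
        ⟪a, s⟫_ℝ = ⟪b, s⟫_ℝ → a = b) ∧
    ∀ s : EuclideanSpace ℝ (Fin d), ‖s‖ = 1 →
      (∀ a b : EuclideanSpace ℝ (Fin d),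
        (∀ i : Fin d, a i ∈ V.image fun v => v i) →
        (∀ i : Fin d, b i ∈ V.image fun v => v i) →
        ⟪a, s⟫_ℝ = ⟪b, s⟫_ℝ → a = b) →
      (V : Set (EuclideanSpace ℝ (Fin d))) =
        {a : EuclideanSpace ℝ (Fin d) | (∀ i : Fin d, a i ∈ V.image fun v => v i) ∧
          ∃ v ∈ V, ⟪a, s⟫_ℝ = ⟪v, s⟫_ℝ} := by
  haveI : Nonempty (Fin d) := ⟨⟨0, by omega⟩⟩
  haveI : Nontrivial (EuclideanSpace ℝ (Fin d)) := inferInstance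
  constructor
  · -- existence of a generic direction
    classical
    -- the finite set of candidate locations
    set A : Finset (EuclideanSpace ℝ (Fin d)) :=
      ((Fintype.piFinset fun i : Fin d => V.image fun v => v i : Finset (Fin d → ℝ)).image (WithLp.toLp 2)) with hA
    -- bad subspaces
    set D : Finset (Submodule ℝ (EuclideanSpace ℝ (Fin d))) :=
      insert ⊥ (((A ×ˢ A).filter fun p => p.1 ≠ p.2).image
        fun p => (ℝ ∙ (p.1 - p.2))ᗮ) with hD
    have htop : (⊤ : Submodule ℝ (EuclideanSpace ℝ (Fin d))) ∉ D := by
      simp only [hD, Finset.mem_insert, Finset.mem_image, Finset.mem_filter] at *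
      rintro (h | ⟨p, ⟨-, hne⟩, h⟩)
      · exact absurd h.symm bot_ne_top
      · have hw : p.1 - p.2 ≠ 0 := sub_ne_zero.mpr hne
        apply hw
        have : p.1 - p.2 ∈ (ℝ ∙ (p.1 - p.2))ᗮ := h ▸ Submodule.mem_top
        exact inner_self_eq_zero.mp (Submodule.mem_orthogonal_singleton_iff_inner_left.mp this)
    have hcover : (⋃ p ∈ D, (p : Set (EuclideanSpace ℝ (Fin d)))) ≠ Set.univ :=
      Subspace.biUnion_ne_univ_of_top_notMem htop
    obtain ⟨s₀, hs₀⟩ : ∃ s₀ : EuclideanSpace ℝ (Fin d), ∀ p ∈ D, s₀ ∉ p := by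
      by_contra hcon
      push_neg at hcon
      apply hcover
      ext x
      simp only [Set.mem_iUnion, Set.mem_univ, iff_true]
      obtain ⟨p, hp, hx⟩ := hcon x
      exact ⟨p, hp, hx⟩
    have hs₀ne : s₀ ≠ 0 := by
      intro h
      exact hs₀ ⊥ (Finset.mem_insert_self _ _) (by simp [h])
    have hkey : ∀ a b : EuclideanSpace ℝ (Fin d), a ∈ A → b ∈ A → a ≠ b → ⟪a - b, s₀⟫_ℝ ≠ 0 := by
      intro a b ha hb hne hinner
      refine hs₀ ((ℝ ∙ (a - b))ᗮ) ?_ ?_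
      · exact Finset.mem_insert_of_mem (Finset.mem_image.mpr
          ⟨(a, b), Finset.mem_filter.mpr ⟨Finset.mem_product.mpr ⟨ha, hb⟩, hne⟩, rfl⟩)
      · exact Submodule.mem_orthogonal_singleton_iff_inner_left.mpr
          ((real_inner_comm _ _).trans hinner)
    refine ⟨‖s₀‖⁻¹ • s₀, ?_, ?_⟩
    · rw [norm_smul]
      simp [norm_ne_zero_iff.mpr hs₀ne, inv_mul_cancel₀ (norm_ne_zero_iff.mpr hs₀ne)]
    · intro a b ha hb hinner
      by_contra hne
      have haA : a ∈ A := by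
        rw [hA, Finset.mem_image]; exact ⟨a.ofLp, Fintype.mem_piFinset.mpr ha, rfl⟩
      have hbA : b ∈ A := by
        rw [hA, Finset.mem_image]; exact ⟨b.ofLp, Fintype.mem_piFinset.mpr hb, rfl⟩
      have : ⟪a - b, ‖s₀‖⁻¹ • s₀⟫_ℝ = 0 := by
        rw [inner_sub_left, hinner, sub_self]
      rw [inner_smul_right] at this
      have h2 : ⟪a - b, s₀⟫_ℝ = 0 := by
        rcases mul_eq_zero.mp this with h | h
        · exact absurd h (inv_ne_zero (norm_ne_zero_iff.mpr hs₀ne))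
        · exact h
      exact hkey a b haA hbA hne h2
  · intro s hs hinj
    ext a
    simp only [Finset.coe_sort_coe, Set.mem_setOf_eq, Finset.mem_coe]
    constructor
    · intro haV
      exact ⟨fun i => Finset.mem_image.mpr ⟨a, haV, rfl⟩, a, haV, rfl⟩
    · rintro ⟨hcoords, v, hv, hinner⟩
      have hvcoords : ∀ i : Fin d, v i ∈ V.image fun w => w i :=
        fun i => Finset.mem_image.mpr ⟨v, hv, rfl⟩
      have := hinj a v hcoords hvcoords hinner
      rwa [this]
end
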